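/- Let X and Y be commuting elements of a commutative ℝ-algebra (or of any ring where X and Y commute), let α, β be natural numbers, and let q be a real number with q > 1. Then there exist real coefficients t_0, t_1, …, t_{α+β} such that X^α Y^β = Σ_{n=0}^{α+β} t_n (X + q^n Y)^{α+β}. -/

import Mathlib

/-- If `X` and `Y` commute in an `ℝ`-algebra, `α β : ℕ` and `q > 1`, then the
monomial `X^α Y^β` is a real linear combination of the powers `(X + qⁿ • Y)^(α+β)`
for `0 ≤ n ≤ α + β`. -/
theorem pow_mul_pow_eq_lin_comb_of_powers
    {A : Type*} [Ring A] [Algebra ℝ A] (X Y : A) (hXY : X * Y = Y * X)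
    (α β : ℕ) (q : ℝ) (hq : 1 < q) :
    ∃ t : ℕ → ℝ,
      X ^ α * Y ^ β =
        ∑ n ∈ Finset.range (α + β + 1), t n • (X + q ^ n • Y) ^ (α + β) := by
  set m := α + β with hm
  have hβm : β ≤ m := Nat.le_add_left β α
  have hαm : m - β = α := by omega
  have hchoosepos : (0 : ℝ) < (m.choose β : ℝ) := by
    exact_mod_cast Nat.choose_pos hβm
  -- injectivity of nodes
  have hv : Set.InjOn (fun n : ℕ => q ^ n) (Finset.range (m + 1) : Finset ℕ) := by
    have : StrictMono (fun n : ℕ => q ^ n) := fun a b hab => pow_lt_pow_right₀ hq hab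
    exact fun a _ b _ h => this.injective h
  set r : ℕ → ℝ := fun n => if n = β then ((m.choose β : ℝ))⁻¹ else 0 with hr
  set P : Polynomial ℝ := Lagrange.interpolate (Finset.range (m + 1)) (fun n => q ^ n) r
    with hP
  have hdeg : P.natDegree < m + 1 := by
    rcases eq_or_ne P 0 with h | h
    · simp [h]
    · rw [Polynomial.natDegree_lt_iff_degree_lt h]
      have := Lagrange.degree_interpolate_lt r hv
      simpa [Finset.card_range, hP] using this
  have heval : ∀ j ∈ Finset.range (m + 1),
      ∑ n ∈ Finset.range (m + 1), P.coeff n * (q ^ j) ^ n = r j := by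
    intro j hj
    rw [← Polynomial.eval_eq_sum_range' hdeg]
    exact Lagrange.eval_interpolate_at_node r hv hj
  refine ⟨P.coeff, ?_⟩
  symm
  have hc : ∀ n : ℕ, Commute X (q ^ n • Y) := fun n => Commute.smul_right (hXY : Commute X Y) _
  calc ∑ n ∈ Finset.range (m + 1), P.coeff n • (X + q ^ n • Y) ^ m
      = ∑ n ∈ Finset.range (m + 1), ∑ k ∈ Finset.range (m + 1),
          (P.coeff n * (q ^ (m - k)) ^ n) • (X ^ k * Y ^ (m - k) * (m.choose k : A)) := by
        refine Finset.sum_congr rfl fun n _ => ?_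
        rw [(hc n).add_pow, Finset.smul_sum]
        refine Finset.sum_congr rfl fun k hk => ?_
        have hk' : k ≤ m := Nat.lt_succ_iff.mp (Finset.mem_range.mp hk)
        rw [smul_pow, mul_smul_comm, smul_mul_assoc, smul_smul]
        congr 2
        rw [← pow_mul, ← pow_mul, Nat.mul_comm]
    _ = ∑ k ∈ Finset.range (m + 1),
          (∑ n ∈ Finset.range (m + 1), P.coeff n * (q ^ (m - k)) ^ n) •
            (X ^ k * Y ^ (m - k) * (m.choose k : A)) := by
        rw [Finset.sum_comm]
        refine Finset.sum_congr rfl fun k _ => ?_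
        rw [Finset.sum_smul]
    _ = ∑ k ∈ Finset.range (m + 1),
          (r (m - k)) • (X ^ k * Y ^ (m - k) * (m.choose k : A)) := by
        refine Finset.sum_congr rfl fun k hk => ?_
        have hk' : k ≤ m := Nat.lt_succ_iff.mp (Finset.mem_range.mp hk)
        rw [heval (m - k) (Finset.mem_range.mpr (by omega))]
    _ = (r β) • (X ^ α * Y ^ β * (m.choose α : A)) := by
        rw [Finset.sum_eq_single α]
        · rw [show m - α = β by omega]
        · intro k hk hkα
          have hk' : k ≤ m := Nat.lt_succ_iff.mp (Finset.mem_range.mp hk)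
          have : m - k ≠ β := by omega
          simp [hr, this]
        · intro h
          exact absurd (Finset.mem_range.mpr (by omega)) h
    _ = X ^ α * Y ^ β := by
        have hcs : (m.choose α : ℕ) = m.choose β := by
          rw [← hαm, Nat.choose_symm hβm]
        have h1 : X ^ α * Y ^ β * (m.choose α : A) = (m.choose β : ℝ) • (X ^ α * Y ^ β) := by
          rw [(Nat.cast_commute (m.choose α) (X ^ α * Y ^ β)).symm.eq, hcs,
            ← nsmul_eq_mul, ← Nat.cast_smul_eq_nsmul ℝ]
        rw [h1, hr]
        simp [smul_smul, inv_mul_cancel₀ (ne_of_gt hchoosepos)]
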